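/- Let Ĉ ⊆ ℝ² be a closed convex cone with Ĉ ∩ ℝ²₊ = {0}. If the Clausius temperature scale is essentially unique (i.e., all pairs (β₁,β₂) of positive reals with β·q ≤ 0 for all q ∈ Ĉ are positive multiples of one another), then Ĉ contains a nonzero reversible element: some q* ≠ 0 with both q* ∈ Ĉ and -q* ∈ Ĉ. -/

import Mathlib

namespace UFR

/-- dot product on ℝ × ℝ, written out. -/
def dot (β q : ℝ × ℝ) : ℝ := β.1 * q.1 + β.2 * q.2

lemma cont_dot (β : ℝ × ℝ) : Continuous fun q : ℝ × ℝ => dot β q := by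
  unfold dot; fun_prop

lemma dot_smul (β : ℝ × ℝ) (α : ℝ) (q : ℝ × ℝ) : dot β (α • q) = α * dot β q := by
  simp [dot, Prod.smul_def, smul_eq_mul]; ring

/-- Perturbation/compactness lemma. -/
lemma pert (C : Set (ℝ × ℝ)) (hclosed : IsClosed C)
    (hcone : ∀ q ∈ C, ∀ α : ℝ, 0 < α → α • q ∈ C)
    (β v : ℝ × ℝ) (hv : ∀ q : ℝ × ℝ, ‖q‖ = 1 → dot v q ≤ 1)
    (hβ : ∀ q ∈ C, dot β q ≤ 0)
    (hfail : ∀ ε : ℝ, 0 < ε → ∃ q ∈ C, 0 < dot β q + ε * dot v q) :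
    ∃ q ∈ C, ‖q‖ = 1 ∧ dot β q = 0 ∧ 0 ≤ dot v q := by
  set Z : ℕ → Set (ℝ × ℝ) :=
    fun n => (C ∩ {q | ‖q‖ = 1}) ∩ ({q | -(1 / (n + 1)) ≤ dot β q} ∩ {q | 0 ≤ dot v q}) with hZ
  have hZclosed : ∀ n : ℕ, IsClosed (Z n) := fun n =>
    ((hclosed.inter (isClosed_eq continuous_norm continuous_const)).inter
      ((isClosed_le continuous_const (cont_dot β)).inter
        (isClosed_le continuous_const (cont_dot v))))
  have hZcompact : ∀ n : ℕ, IsCompact (Z n) := by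
    intro n
    apply IsCompact.of_isClosed_subset (isCompact_sphere (0 : ℝ × ℝ) 1) (hZclosed n)
    intro q hq
    simp only [Metric.mem_sphere, dist_zero_right]
    exact hq.1.2
  have hZne : ∀ n : ℕ, (Z n).Nonempty := by
    intro n
    have hpos : (0 : ℝ) < 1 / (n + 1) := by positivity
    obtain ⟨q, hqC, hq⟩ := hfail (1 / (n + 1)) hpos
    have hq0 : q ≠ 0 := by
      rintro rfl
      simp [dot] at hq
    have hnq : (0 : ℝ) < ‖q‖ := norm_pos_iff.mpr hq0
    refine ⟨(‖q‖⁻¹ : ℝ) • q, ?_⟩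
    have hmem : (‖q‖⁻¹ : ℝ) • q ∈ C := hcone q hqC _ (by positivity)
    have hn1 : ‖(‖q‖⁻¹ : ℝ) • q‖ = 1 := by
      rw [norm_smul]; simp [abs_of_pos (inv_pos.mpr hnq)]
      field_simp
    have hkey : 0 < dot β ((‖q‖⁻¹ : ℝ) • q) + (1 / (n + 1)) * dot v ((‖q‖⁻¹ : ℝ) • q) := by
      rw [dot_smul, dot_smul]
      have := mul_pos (inv_pos.mpr hnq) hq
      calc (0 : ℝ) < ‖q‖⁻¹ * (dot β q + 1 / (n + 1) * dot v q) := this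
        _ = ‖q‖⁻¹ * dot β q + 1 / (n + 1) * (‖q‖⁻¹ * dot v q) := by ring
    set q' := (‖q‖⁻¹ : ℝ) • q
    have hβq' : dot β q' ≤ 0 := hβ q' hmem
    have hvq' : 0 ≤ dot v q' := by
      by_contra hcon
      push_neg at hcon
      nlinarith
    have hvq1 : dot v q' ≤ 1 := hv q' hn1
    refine ⟨⟨hmem, hn1⟩, ?_, hvq'⟩
    simp only [Set.mem_setOf_eq]
    nlinarith
  have hZdir : Directed (· ⊇ ·) Z := by
    have hanti : Antitone Z := by
      intro m n hmn
      apply Set.inter_subset_inter_right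
      apply Set.inter_subset_inter_left
      intro q hq
      simp only [Set.mem_setOf_eq] at hq ⊢
      have h1 : (1 : ℝ) / (n + 1) ≤ 1 / (m + 1) := by
        apply one_div_le_one_div_of_le (by positivity)
        exact_mod_cast by omega
      linarith
    exact hanti.directed_ge
  obtain ⟨q, hq⟩ := IsCompact.nonempty_iInter_of_directed_nonempty_isCompact_isClosed
    Z hZdir hZne hZcompact hZclosed
  simp only [Set.mem_iInter] at hq
  have hqC : q ∈ C := (hq 0).1.1
  have hqn : ‖q‖ = 1 := (hq 0).1.2
  have hqv : 0 ≤ dot v q := (hq 0).2.2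
  refine ⟨q, hqC, hqn, ?_, hqv⟩
  have hle : dot β q ≤ 0 := hβ q hqC
  by_contra hne
  have hlt : dot β q < 0 := lt_of_le_of_ne hle hne
  obtain ⟨n, hn⟩ := exists_nat_one_div_lt (show (0 : ℝ) < -dot β q by linarith)
  have := (hq n).2.1
  simp only [Set.mem_setOf_eq] at this
  linarith


lemma succ (C : Set (ℝ × ℝ)) (hclosed : IsClosed C)
    (hcone : ∀ q ∈ C, ∀ α : ℝ, 0 < α → α • q ∈ C)
    (hK : ∀ q ∈ C, 0 ≤ q.1 → 0 ≤ q.2 → q = 0)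
    (hno : ∀ q : ℝ × ℝ, q ≠ 0 → q ∈ C → -q ∉ C)
    (β : ℝ × ℝ) (hβne : β ≠ 0) (hβ : ∀ q ∈ C, dot β q ≤ 0) :
    ∃ ε : ℝ, 0 < ε ∧ ((∀ q ∈ C, dot β q + ε * q.1 ≤ 0) ∨ (∀ q ∈ C, dot β q + ε * q.2 ≤ 0)) := by
  have hd1 : ∀ q : ℝ × ℝ, dot ((1 : ℝ), (0 : ℝ)) q = q.1 := by intro q; simp [dot]
  have hd2 : ∀ q : ℝ × ℝ, dot ((0 : ℝ), (1 : ℝ)) q = q.2 := by intro q; simp [dot]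
  have hv1 : ∀ q : ℝ × ℝ, ‖q‖ = 1 → dot ((1 : ℝ), (0 : ℝ)) q ≤ 1 := by
    intro q hq
    rw [hd1]
    calc q.1 ≤ |q.1| := le_abs_self _
      _ = ‖q.1‖ := (Real.norm_eq_abs _).symm
      _ ≤ ‖q‖ := norm_fst_le q
      _ = 1 := hq
  have hv2 : ∀ q : ℝ × ℝ, ‖q‖ = 1 → dot ((0 : ℝ), (1 : ℝ)) q ≤ 1 := by
    intro q hq
    rw [hd2]
    calc q.2 ≤ |q.2| := le_abs_self _
      _ = ‖q.2‖ := (Real.norm_eq_abs _).symm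
      _ ≤ ‖q‖ := norm_snd_le q
      _ = 1 := hq
  by_contra hc
  push_neg at hc
  have hfail1 : ∀ ε : ℝ, 0 < ε → ∃ q ∈ C, 0 < dot β q + ε * dot ((1 : ℝ), (0 : ℝ)) q := by
    intro ε hε
    obtain ⟨q, hqC, hq⟩ := (hc ε hε).1
    exact ⟨q, hqC, by rw [hd1]; linarith⟩
  have hfail2 : ∀ ε : ℝ, 0 < ε → ∃ q ∈ C, 0 < dot β q + ε * dot ((0 : ℝ), (1 : ℝ)) q := by
    intro ε hε
    obtain ⟨q, hqC, hq⟩ := (hc ε hε).2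
    exact ⟨q, hqC, by rw [hd2]; linarith⟩
  obtain ⟨qh, qhC, qhn, qh0, qh1⟩ := pert C hclosed hcone β _ hv1 hβ hfail1
  obtain ⟨qb, qbC, qbn, qb0, qb2⟩ := pert C hclosed hcone β _ hv2 hβ hfail2
  rw [hd1] at qh1
  rw [hd2] at qb2
  have qh2 : qh.2 < 0 := by
    by_contra h
    push_neg at h
    have := hK qh qhC qh1 h
    rw [this] at qhn
    simp at qhn
  have qb1 : qb.1 < 0 := by
    by_contra h
    push_neg at h
    have := hK qb qbC h qb2
    rw [this] at qbn
    simp at qbn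
  have e1 : β.1 * qb.1 + β.2 * qb.2 = 0 := qb0
  have e2 : β.1 * qh.1 + β.2 * qh.2 = 0 := qh0
  have hdet : qb.1 * qh.2 - qb.2 * qh.1 = 0 := by
    have hb : β.1 ≠ 0 ∨ β.2 ≠ 0 := by
      by_contra h
      push_neg at h
      exact hβne (Prod.ext h.1 h.2)
    rcases hb with hb | hb
    · have : (qb.1 * qh.2 - qb.2 * qh.1) * β.1 = 0 := by
        linear_combination qh.2 * e1 - qb.2 * e2
      exact (mul_eq_zero.mp this).resolve_right hb
    · have : (qb.1 * qh.2 - qb.2 * qh.1) * β.2 = 0 := by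
        linear_combination (-qh.1) * e1 + qb.1 * e2
      exact (mul_eq_zero.mp this).resolve_right hb
  have qh1pos : 0 < qh.1 := by
    rcases lt_or_eq_of_le qh1 with h | h
    · exact h
    · exfalso; nlinarith
  have qb2pos : 0 < qb.2 := by nlinarith
  set α : ℝ := (-qb.1) / qh.1 with hα
  have hαpos : 0 < α := div_pos (by linarith) qh1pos
  have hsmul : α • qh = -qb := by
    have h1 : α * qh.1 = -qb.1 := by rw [hα]; field_simp
    have h2 : α * qh.2 = -qb.2 := by
      rw [hα]
      field_simp
      nlinarith [hdet]
    apply Prod.ext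
    · simpa using h1
    · simpa using h2
  have hmem : -qb ∈ C := hsmul ▸ hcone qh qhC α hαpos
  exact hno qb (fun h => by rw [h] at qb1; simp at qb1) qbC hmem

end UFR

open UFR in
/-- For a two-state substance, essential uniqueness of the Clausius temperature scale
forces the existence of a nonzero reversible element of the cone `Ĉ`. -/
theorem uniqueness_forces_reversible (C : Set (ℝ × ℝ))
    (hclosed : IsClosed C) (hconv : Convex ℝ C)
    (hcone : ∀ q ∈ C, ∀ α : ℝ, 0 < α → α • q ∈ C)
    (hKP : C ∩ {x : ℝ × ℝ | 0 ≤ x.1 ∧ 0 ≤ x.2} = {0})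
    (huniq : ∀ β γ : ℝ × ℝ,
      (0 < β.1 ∧ 0 < β.2 ∧ ∀ q ∈ C, β.1 * q.1 + β.2 * q.2 ≤ 0) →
      (0 < γ.1 ∧ 0 < γ.2 ∧ ∀ q ∈ C, γ.1 * q.1 + γ.2 * q.2 ≤ 0) →
      ∃ l : ℝ, 0 < l ∧ γ = l • β) :
    ∃ q : ℝ × ℝ, q ≠ 0 ∧ q ∈ C ∧ -q ∈ C := by
  by_contra hcontra
  push_neg at hcontra
  have hno : ∀ q : ℝ × ℝ, q ≠ 0 → q ∈ C → -q ∉ C := hcontra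
  have hK : ∀ q ∈ C, 0 ≤ q.1 → 0 ≤ q.2 → q = 0 := by
    intro q hq h1 h2
    have : q ∈ C ∩ {x : ℝ × ℝ | 0 ≤ x.1 ∧ 0 ≤ x.2} := ⟨hq, h1, h2⟩
    rw [hKP] at this
    exact this
  have h0C : (0 : ℝ × ℝ) ∈ C := by
    have : (0 : ℝ × ℝ) ∈ C ∩ {x : ℝ × ℝ | 0 ≤ x.1 ∧ 0 ≤ x.2} := by rw [hKP]; rfl
    exact this.1
  -- separation step
  set U : Set (ℝ × ℝ) := {x | 0 < x.1 ∧ 0 < x.2} with hU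
  have hUopen : IsOpen U := by
    have : U = {x : ℝ × ℝ | 0 < x.1} ∩ {x : ℝ × ℝ | 0 < x.2} := rfl
    rw [this]
    exact (isOpen_lt continuous_const continuous_fst).inter
      (isOpen_lt continuous_const continuous_snd)
  have hUconv : Convex ℝ U := by
    intro x hx y hy a b ha hb hab
    have hx1 := hx.1; have hx2 := hx.2; have hy1 := hy.1; have hy2 := hy.2
    constructor
    · show 0 < a * x.1 + b * y.1
      rcases eq_or_lt_of_le ha with h | h
      · have hb1 : b = 1 := by linarith
        rw [← h, hb1]; simpa using hy1
      · nlinarith [mul_nonneg hb hy1.le]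
    · show 0 < a * x.2 + b * y.2
      rcases eq_or_lt_of_le ha with h | h
      · have hb1 : b = 1 := by linarith
        rw [← h, hb1]; simpa using hy2
      · nlinarith [mul_nonneg hb hy2.le]
  have hdisj : Disjoint U C := by
    rw [Set.disjoint_left]
    intro x hxU hxC
    have := hK x hxC hxU.1.le hxU.2.le
    rw [this] at hxU
    exact lt_irrefl 0 hxU.1
  obtain ⟨f, u, hfU, hfC⟩ := geometric_hahn_banach_open hUconv hUopen hconv hdisj
  have hu0 : u ≤ 0 := by
    have := hfC 0 h0C
    simpa using this
  have hfC' : ∀ q ∈ C, 0 ≤ f q := by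
    intro q hq
    by_contra h
    push_neg at h
    have hα : 0 < (u - 1) / f q := div_pos_of_neg_of_neg (by linarith) h
    have hmem := hcone q hq _ hα
    have := hfC _ hmem
    rw [map_smul] at this
    have hval : ((u - 1) / f q) • f q = u - 1 := by
      rw [smul_eq_mul, div_mul_cancel₀ _ (ne_of_lt h)]
    rw [hval] at this
    linarith
  have hfU' : ∀ a ∈ U, f a < 0 := fun a ha => lt_of_lt_of_le (hfU a ha) hu0
  set b1 : ℝ := -(f (1, 0)) with hb1def
  set b2 : ℝ := -(f (0, 1)) with hb2def
  have hdecomp : ∀ x : ℝ × ℝ, f x = -(x.1 * b1) - x.2 * b2 := by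
    intro x
    have hx : x = x.1 • ((1 : ℝ), (0 : ℝ)) + x.2 • ((0 : ℝ), (1 : ℝ)) := by
      apply Prod.ext <;> simp
    have hfx : f x = x.1 * f (1, 0) + x.2 * f (0, 1) := by
      conv_lhs => rw [hx]
      rw [map_add, map_smul, map_smul, smul_eq_mul, smul_eq_mul]
    rw [hfx, hb1def, hb2def]
    ring
  have hbdot : ∀ q ∈ C, dot (b1, b2) q ≤ 0 := by
    intro q hq
    have h := hfC' q hq
    rw [hdecomp] at h
    simp only [dot]
    linarith
  have hbU : ∀ x ∈ U, 0 < b1 * x.1 + b2 * x.2 := by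
    intro x hx
    have h := hfU' x hx
    rw [hdecomp] at h
    linarith
  have hs : 0 < b1 + b2 := by
    have := hbU (1, 1) ⟨one_pos, one_pos⟩
    simpa using this
  have hb1nn : 0 ≤ b1 := by
    by_contra h
    push_neg at h
    rcases le_or_gt b2 0 with h2 | h2
    · have := hbU (1, 1) ⟨one_pos, one_pos⟩
      simp at this
      linarith
    · have hε : 0 < -b1 / (2 * b2) := div_pos (by linarith) (by linarith)
      have := hbU (1, -b1 / (2 * b2)) ⟨one_pos, hε⟩
      simp only at this
      have : 0 < b1 + b2 * (-b1 / (2 * b2)) := by linarith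
      rw [show b2 * (-b1 / (2 * b2)) = -b1 / 2 by field_simp] at this
      linarith
  have hb2nn : 0 ≤ b2 := by
    by_contra h
    push_neg at h
    rcases le_or_gt b1 0 with h2 | h2
    · have := hbU (1, 1) ⟨one_pos, one_pos⟩
      simp at this
      linarith
    · have hε : 0 < -b2 / (2 * b1) := div_pos (by linarith) (by linarith)
      have := hbU (-b2 / (2 * b1), 1) ⟨hε, one_pos⟩
      simp only at this
      have : 0 < b1 * (-b2 / (2 * b1)) + b2 := by linarith
      rw [show b1 * (-b2 / (2 * b1)) = -b2 / 2 by field_simp] at this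
      linarith
  -- upgrade to a strictly positive supporting functional
  have hstar : ∃ β : ℝ × ℝ, 0 < β.1 ∧ 0 < β.2 ∧ ∀ q ∈ C, dot β q ≤ 0 := by
    rcases eq_or_lt_of_le hb1nn with h1 | h1
    · -- b1 = 0, b2 > 0; perturb in direction (1,0)
      have hb2pos : 0 < b2 := by linarith
      have hd1 : ∀ q : ℝ × ℝ, dot ((1 : ℝ), (0 : ℝ)) q = q.1 := by intro q; simp [UFR.dot]
      have hv1 : ∀ q : ℝ × ℝ, ‖q‖ = 1 → UFR.dot ((1 : ℝ), (0 : ℝ)) q ≤ 1 := by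
        intro q hq
        rw [hd1]
        calc q.1 ≤ |q.1| := le_abs_self _
          _ = ‖q.1‖ := (Real.norm_eq_abs _).symm
          _ ≤ ‖q‖ := norm_fst_le q
          _ = 1 := hq
      have key : ∃ ε : ℝ, 0 < ε ∧ ∀ q ∈ C, UFR.dot (b1, b2) q + ε * q.1 ≤ 0 := by
        by_contra hcc
        push_neg at hcc
        have hfail : ∀ ε : ℝ, 0 < ε → ∃ q ∈ C, 0 < UFR.dot (b1, b2) q + ε * UFR.dot ((1 : ℝ), (0 : ℝ)) q := by
          intro ε hε
          obtain ⟨q, hqC, hq⟩ := hcc ε hε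
          exact ⟨q, hqC, by rw [hd1]; linarith⟩
        obtain ⟨q, hqC, hqn, hq0, hq1⟩ := UFR.pert C hclosed hcone _ _ hv1 hbdot hfail
        rw [hd1] at hq1
        have hdq : b1 * q.1 + b2 * q.2 = 0 := hq0
        have hq2 : q.2 = 0 := by
          rw [← h1] at hdq
          simp at hdq
          rcases hdq with h | h
          · linarith
          · exact h
        have := hK q hqC hq1 (le_of_eq hq2.symm)
        rw [this] at hqn
        simp at hqn
      obtain ⟨ε, hε, hεsupp⟩ := key
      refine ⟨(ε, b2), hε, hb2pos, ?_⟩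
      intro q hq
      have := hεsupp q hq
      simp only [UFR.dot] at this ⊢
      rw [← h1] at this
      linarith
    · rcases eq_or_lt_of_le hb2nn with h2 | h2
      · -- b2 = 0, b1 > 0; perturb in direction (0,1)
        have hd2 : ∀ q : ℝ × ℝ, dot ((0 : ℝ), (1 : ℝ)) q = q.2 := by intro q; simp [UFR.dot]
        have hv2 : ∀ q : ℝ × ℝ, ‖q‖ = 1 → UFR.dot ((0 : ℝ), (1 : ℝ)) q ≤ 1 := by
          intro q hq
          rw [hd2]
          calc q.2 ≤ |q.2| := le_abs_self _
            _ = ‖q.2‖ := (Real.norm_eq_abs _).symm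
            _ ≤ ‖q‖ := norm_snd_le q
            _ = 1 := hq
        have key : ∃ ε : ℝ, 0 < ε ∧ ∀ q ∈ C, UFR.dot (b1, b2) q + ε * q.2 ≤ 0 := by
          by_contra hcc
          push_neg at hcc
          have hfail : ∀ ε : ℝ, 0 < ε → ∃ q ∈ C, 0 < UFR.dot (b1, b2) q + ε * UFR.dot ((0 : ℝ), (1 : ℝ)) q := by
            intro ε hε
            obtain ⟨q, hqC, hq⟩ := hcc ε hε
            exact ⟨q, hqC, by rw [hd2]; linarith⟩
          obtain ⟨q, hqC, hqn, hq0, hq2⟩ := UFR.pert C hclosed hcone _ _ hv2 hbdot hfail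
          rw [hd2] at hq2
          have hdq : b1 * q.1 + b2 * q.2 = 0 := hq0
          have hq1 : q.1 = 0 := by
            rw [← h2] at hdq
            simp at hdq
            rcases hdq with h | h
            · linarith
            · exact h
          have := hK q hqC (le_of_eq hq1.symm) hq2
          rw [this] at hqn
          simp at hqn
        obtain ⟨ε, hε, hεsupp⟩ := key
        refine ⟨(b1, ε), h1, hε, ?_⟩
        intro q hq
        have := hεsupp q hq
        simp only [UFR.dot] at this ⊢
        rw [← h2] at this
        linarith
      · exact ⟨(b1, b2), h1, h2, hbdot⟩
  obtain ⟨β, hβ1, hβ2, hβsupp⟩ := hstar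
  have hβne : β ≠ 0 := by
    intro h
    rw [h] at hβ1
    simp at hβ1
  obtain ⟨ε, hε, hdisc⟩ := UFR.succ C hclosed hcone hK hno β hβne hβsupp
  rcases hdisc with hcase | hcase
  · set γ : ℝ × ℝ := (β.1 + ε, β.2) with hγ
    have hγsupp : ∀ q ∈ C, γ.1 * q.1 + γ.2 * q.2 ≤ 0 := by
      intro q hq
      have := hcase q hq
      simp only [UFR.dot] at this
      simp only [hγ]
      linarith
    obtain ⟨l, hl, heq⟩ := huniq β γ ⟨hβ1, hβ2, fun q hq => hβsupp q hq⟩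
      ⟨by simp [hγ]; linarith, by simp [hγ]; linarith, hγsupp⟩
    have h1 : γ.1 = l * β.1 := by rw [heq]; simp [Prod.smul_def, smul_eq_mul]
    have h2 : γ.2 = l * β.2 := by rw [heq]; simp [Prod.smul_def, smul_eq_mul]
    simp only [hγ] at h1 h2
    have hl1 : l = 1 := by
      have : β.2 * (l - 1) = 0 := by linarith [h2]; 
      rcases mul_eq_zero.mp (by nlinarith : β.2 * (l - 1) = 0) with h | h
      · linarith
      · linarith
    rw [hl1] at h1
    linarith
  · set γ : ℝ × ℝ := (β.1, β.2 + ε) with hγ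
    have hγsupp : ∀ q ∈ C, γ.1 * q.1 + γ.2 * q.2 ≤ 0 := by
      intro q hq
      have := hcase q hq
      simp only [UFR.dot] at this
      simp only [hγ]
      linarith
    obtain ⟨l, hl, heq⟩ := huniq β γ ⟨hβ1, hβ2, fun q hq => hβsupp q hq⟩
      ⟨by simp [hγ]; linarith, by simp [hγ]; linarith, hγsupp⟩
    have h1 : γ.1 = l * β.1 := by rw [heq]; simp [Prod.smul_def, smul_eq_mul]
    have h2 : γ.2 = l * β.2 := by rw [heq]; simp [Prod.smul_def, smul_eq_mul]
    simp only [hγ] at h1 h2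
    have hl1 : l = 1 := by
      rcases mul_eq_zero.mp (by nlinarith : β.1 * (l - 1) = 0) with h | h
      · linarith
      · linarith
    rw [hl1] at h2
    linarith
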